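/- Landweber error decrease: let K : X → Y be bounded linear with ω := 1 and ‖K‖ ≤ 1, let x† satisfy ‖Kx† − y^δ‖ ≤ δ' and let x_m ∈ X with ‖Kx_m − y^δ‖ > 2δ'. Then the next Landweber iterate x_{m+1} = x_m + K*(y^δ − Kx_m) satisfies ‖x_{m+1} − x†‖ < ‖x_m − x†‖. -/

import Mathlib

/-- Landweber error decrease: if `‖K‖ ≤ 1`, `‖K x† - y^δ‖ ≤ δ'` and the residual of the
current iterate satisfies `‖K x_m - y^δ‖ > 2δ'`, then the next Landweber iterate
`x_{m+1} = x_m + K*(y^δ - K x_m)` is strictly closer to `x†`. -/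
theorem landweber_error_decrease
    {X Y : Type*} [NormedAddCommGroup X] [InnerProductSpace ℝ X] [CompleteSpace X]
    [NormedAddCommGroup Y] [InnerProductSpace ℝ Y] [CompleteSpace Y]
    (K : X →L[ℝ] Y) (hK : ‖K‖ ≤ 1)
    (xdag xm : X) (yδ : Y) (δ' : ℝ)
    (hnoise : ‖K xdag - yδ‖ ≤ δ')
    (hres : 2 * δ' < ‖K xm - yδ‖) :
    ‖xm + ContinuousLinearMap.adjoint K (yδ - K xm) - xdag‖ < ‖xm - xdag‖ := by
  set e := xm - xdag with he
  set r := K xm - yδ with hr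
  set a := ContinuousLinearMap.adjoint K r with ha
  have hrw : xm + ContinuousLinearMap.adjoint K (yδ - K xm) - xdag = e - a := by
    have : yδ - K xm = -r := by simp [hr]
    rw [this, map_neg]
    simp [he, ha]
    abel
  rw [hrw]
  have hinner : (inner ℝ e a : ℝ) = inner ℝ (K e) r := by
    rw [ha, ContinuousLinearMap.adjoint_inner_right]
  have hKe : K e = r - (K xdag - yδ) := by
    simp [he, hr, map_sub]
  have hinner2 : (inner ℝ (K e) r : ℝ) = ‖r‖ ^ 2 - inner ℝ (K xdag - yδ) r := by
    rw [hKe, inner_sub_left, real_inner_self_eq_norm_sq]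
  have hbound : (inner ℝ (K xdag - yδ) r : ℝ) ≤ δ' * ‖r‖ := by
    calc (inner ℝ (K xdag - yδ) r : ℝ) ≤ ‖K xdag - yδ‖ * ‖r‖ := real_inner_le_norm _ _
    _ ≤ δ' * ‖r‖ := by
        apply mul_le_mul_of_nonneg_right hnoise (norm_nonneg _)
  have hinner3 : ‖r‖ ^ 2 - δ' * ‖r‖ ≤ (inner ℝ e a : ℝ) := by
    rw [hinner, hinner2]; linarith
  have hanorm : ‖a‖ ≤ ‖r‖ := by
    calc ‖a‖ ≤ ‖ContinuousLinearMap.adjoint K‖ * ‖r‖ := (ContinuousLinearMap.adjoint K).le_opNorm r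
    _ ≤ ‖r‖ := by
        rw [LinearIsometryEquiv.norm_map ContinuousLinearMap.adjoint K]
        nlinarith [norm_nonneg r]
  have hδ : 0 ≤ δ' := le_trans (norm_nonneg _) hnoise
  have hrpos : 0 < ‖r‖ := by linarith
  have hsq : ‖e - a‖ ^ 2 = ‖e‖ ^ 2 - 2 * inner ℝ e a + ‖a‖ ^ 2 := norm_sub_sq_real e a
  have hlt : ‖e - a‖ ^ 2 < ‖e‖ ^ 2 := by
    nlinarith [norm_nonneg a, norm_nonneg (e - a)]
  exact lt_of_pow_lt_pow_left₀ 2 (norm_nonneg e) hlt
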